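/- Let m ≥ 1 and for k=1,…,m let 1 ≤ p_k ≤ α_k < q_k < ∞; set 1/p = Σ 1/p_k, 1/q = Σ 1/q_k, 1/α = Σ 1/α_k, and assume the balance condition p_1(1/α_1 − 1/q_1) = ⋯ = p_m(1/α_m − 1/q_m). Then for each k, 1/p_k + 1/q_k − 1/α_k = (p/p_k)(1/p + 1/q − 1/α) > 0; moreover, if w_1,…,w_m are weights each satisfying the reverse Jensen inequality with constant C_J and ν = Π_k w_k^{p/p_k}, then there is a constant C, depending only on C_J and the exponents, such that for every ball B, Π_{k=1}^m w_k(B)^{1/p_k + 1/q_k − 1/α_k} ≤ C · ν(B)^{1/p + 1/q − 1/α}. -/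

import Mathlib

open MeasureTheory Metric ENNReal

noncomputable section

/-- Euclidean space `ℝ^n`. -/
abbrev Rn (n : ℕ) : Type := EuclideanSpace ℝ (Fin n)

/-- A weight on `ℝ^n`: a measurable, everywhere positive, locally integrable function. -/
def IsWeight {n : ℕ} (w : Rn n → ℝ) : Prop :=
  Measurable w ∧ (∀ x, 0 < w x) ∧ LocallyIntegrable w volume

/-- The weighted measure `w(E) = ∫_E w` of a set `E`, as an extended nonnegative real. -/
def wtMass {n : ℕ} (w : Rn n → ℝ) (E : Set (Rn n)) : ℝ≥0∞ :=
  ∫⁻ x in E, ENNReal.ofReal (w x)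

/-- The weighted `L^p` norm of `f` restricted to a set `E`:
`(∫_E |f|^p w)^(1/p)`. -/
def wtLpOn {n : ℕ} (p : ℝ) (w : Rn n → ℝ) (E : Set (Rn n)) (f : Rn n → ℝ) : ℝ≥0∞ :=
  (∫⁻ x in E, ENNReal.ofReal |f x| ^ p * ENNReal.ofReal (w x)) ^ (1 / p)

/-- The weighted `L^p` norm `‖f‖_{L^p(w)}` on all of `ℝ^n`. -/
def wtLp {n : ℕ} (p : ℝ) (w : Rn n → ℝ) (f : Rn n → ℝ) : ℝ≥0∞ :=
  wtLpOn p w Set.univ f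

/-- The weighted weak `L^p` quasinorm of `f` restricted to a set `E`:
`sup_{t>0} t · w({x ∈ E : |f x| > t})^(1/p)`. -/
def wtWLpOn {n : ℕ} (p : ℝ) (w : Rn n → ℝ) (E : Set (Rn n)) (f : Rn n → ℝ) : ℝ≥0∞ :=
  ⨆ (t : ℝ) (_ : 0 < t), ENNReal.ofReal t * wtMass w {x ∈ E | t < |f x|} ^ (1 / p)

/-- The weighted weak `L^p` quasinorm `‖f‖_{WL^p(w)}` on all of `ℝ^n`. -/
def wtWLp {n : ℕ} (p : ℝ) (w : Rn n → ℝ) (f : Rn n → ℝ) : ℝ≥0∞ :=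
  wtWLpOn p w Set.univ f

/-- The weighted amalgam norm `‖f‖_{(L^p,L^q)^α(w;μ)}`. -/
def amalgamNorm {n : ℕ} (p q α : ℝ) (w μ : Rn n → ℝ) (f : Rn n → ℝ) : ℝ≥0∞ :=
  ⨆ (r : ℝ) (_ : 0 < r),
    (∫⁻ y, (wtMass w (ball y r) ^ (1/α - 1/p - 1/q) * wtLpOn p w (ball y r) f) ^ q *
      ENNReal.ofReal (μ y)) ^ (1/q)

/-- The weighted weak amalgam norm `‖f‖_{(WL^p,L^q)^α(w;μ)}`. -/
def wAmalgamNorm {n : ℕ} (p q α : ℝ) (w μ : Rn n → ℝ) (f : Rn n → ℝ) : ℝ≥0∞ :=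
  ⨆ (r : ℝ) (_ : 0 < r),
    (∫⁻ y, (wtMass w (ball y r) ^ (1/α - 1/p - 1/q) * wtWLpOn p w (ball y r) f) ^ q *
      ENNReal.ofReal (μ y)) ^ (1/q)

/-- The product weight `ν_{w⃗} = ∏_k w_k^{p/p_k}`. -/
def nuW {n m : ℕ} (p : ℝ) (pk : Fin m → ℝ) (w : Fin m → Rn n → ℝ) : Rn n → ℝ :=
  fun x => ∏ k, w k x ^ (p / pk k)

/-- The `k`-th factor in the multilinear `A_{P⃗}` condition on a set `B`:
`(|B|⁻¹ ∫_B w^{-p'/p})^{1/p'}` when `p > 1` (note `p'/p = 1/(p-1)` and `1/p' = (p-1)/p`),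
and `(essinf_B w)⁻¹` when `p = 1`. -/
def apFactor {n : ℕ} (pk : ℝ) (w : Rn n → ℝ) (B : Set (Rn n)) : ℝ≥0∞ :=
  if pk = 1 then (essInf (fun x => ENNReal.ofReal (w x)) (volume.restrict B))⁻¹
  else ((volume B)⁻¹ * ∫⁻ x in B, ENNReal.ofReal (w x ^ (-(1 / (pk - 1))))) ^ ((pk - 1) / pk)

/-- The multilinear `A_{P⃗}` condition with constant `CW`. -/
def MultiAP {n m : ℕ} (p : ℝ) (pk : Fin m → ℝ) (w : Fin m → Rn n → ℝ) (CW : ℝ) : Prop :=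
  ∀ (y : Rn n) (r : ℝ), 0 < r →
    ((volume (ball y r))⁻¹ * wtMass (nuW p pk w) (ball y r)) ^ (1/p) *
      (∏ k, apFactor (pk k) (w k) (ball y r)) ≤ ENNReal.ofReal CW

/-- The `A_∞`-comparison condition with constants `Cc`, `δ`. -/
def AinfCompare {n : ℕ} (w : Rn n → ℝ) (Cc δ : ℝ) : Prop :=
  ∀ (y : Rn n) (r : ℝ), 0 < r → ∀ E : Set (Rn n), MeasurableSet E → E ⊆ ball y r →
    wtMass w E ≤ ENNReal.ofReal Cc * (volume E / volume (ball y r)) ^ δ * wtMass w (ball y r)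

/-- Doubling condition with constant `Cd`. -/
def DoublingWt {n : ℕ} (w : Rn n → ℝ) (Cd : ℝ) : Prop :=
  ∀ (y : Rn n) (r : ℝ), 0 < r →
    wtMass w (ball y (2*r)) ≤ ENNReal.ofReal Cd * wtMass w (ball y r)

/-- Reverse Jensen inequality with constant `CJ`. -/
def RevJensen {n : ℕ} (w : Rn n → ℝ) (CJ : ℝ) : Prop :=
  LocallyIntegrable (fun x => Real.log (w x)) volume ∧
  ∀ (y : Rn n) (r : ℝ), 0 < r →
    (∫ x in ball y r, w x) ≤
      CJ * (volume (ball y r)).toReal *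
        Real.exp ((volume (ball y r)).toReal⁻¹ * ∫ x in ball y r, Real.log (w x))

/-- `T` is a.e. `m`-linear. -/
def AEMultilinear {n m : ℕ} (T : (Fin m → Rn n → ℝ) → Rn n → ℝ) : Prop :=
  ∀ g : Fin m → Rn n → ℝ, (∀ k, Measurable (g k)) →
    ∀ (k : Fin m) (c : ℝ) (h : Rn n → ℝ), Measurable h →
      ∀ᵐ x ∂(volume : Measure (Rn n)),
        T (Function.update g k (fun y => c * g k y + h y)) x =
          c * T g x + T (Function.update g k h) x

/-- The complement of the essential support of `g`: the union of all open sets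
on which `g` vanishes almost everywhere. -/
def essSuppCompl {n : ℕ} (g : Rn n → ℝ) : Set (Rn n) :=
  {x | ∃ U : Set (Rn n), IsOpen U ∧ x ∈ U ∧ ∀ᵐ y ∂(volume.restrict U), g y = 0}

/-- The multilinear size property with constant `A`: for a.e. `x` outside the essential
support of one of the entries, `|T(g⃗)(x)|` is dominated by the standard multilinear
fractional kernel applied to `|g_k|`. -/
def SizeProp {n m : ℕ} (T : (Fin m → Rn n → ℝ) → Rn n → ℝ) (A : ℝ) : Prop :=
  ∀ g : Fin m → Rn n → ℝ, (∀ k, Measurable (g k)) → ∀ k₀ : Fin m,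
    ∀ᵐ x ∂(volume.restrict (essSuppCompl (g k₀))),
      ENNReal.ofReal |T g x| ≤ ENNReal.ofReal A *
        ∫⁻ z : Fin m → Rn n,
          (∏ k, ENNReal.ofReal |g k (z k)|) /
            ENNReal.ofReal ((∑ k, dist x (z k)) ^ (m * n))

/-- `b_B`: the average of `b` over the ball `B(y,r)`. -/
def ballAvg {n : ℕ} (b : Rn n → ℝ) (y : Rn n) (r : ℝ) : ℝ :=
  (volume (ball y r)).toReal⁻¹ * ∫ x in ball y r, b x

/-- The BMO seminorm of `b` is bounded by `M`. -/
def BMOBound {n : ℕ} (b : Rn n → ℝ) (M : ℝ) : Prop :=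
  ∀ (y : Rn n) (r : ℝ), 0 < r →
    (volume (ball y r)).toReal⁻¹ * (∫ x in ball y r, |b x - ballAvg b y r|) ≤ M

/-- The commutator `[b,T]_k` in the `k`-th slot. -/
def commAt {n m : ℕ} (b : Rn n → ℝ) (k : Fin m)
    (T : (Fin m → Rn n → ℝ) → Rn n → ℝ) : (Fin m → Rn n → ℝ) → Rn n → ℝ :=
  fun f x => b x * T f x - T (Function.update f k (fun y => b y * f k y)) x

/-- The multilinear commutator `[Σb⃗, T] = Σ_k [b_k,T]_k`. -/
def sumComm {n m : ℕ} (b : Fin m → Rn n → ℝ)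
    (T : (Fin m → Rn n → ℝ) → Rn n → ℝ) : (Fin m → Rn n → ℝ) → Rn n → ℝ :=
  fun f x => ∑ k, commAt (b k) k T f x

/-- The iterated commutator `[Πb⃗, T] = [b_1,[b_2,…[b_{m-1},[b_m,T]_m]_{m-1}…]_2]_1`. -/
def iterComm {n m : ℕ} (b : Fin m → Rn n → ℝ)
    (T : (Fin m → Rn n → ℝ) → Rn n → ℝ) : (Fin m → Rn n → ℝ) → Rn n → ℝ :=
  (List.finRange m).foldr (fun k S => commAt (b k) k S) T

/-- `Φ(t) = t(1 + log⁺ t)`. -/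
def phiLL (t : ℝ) : ℝ := t * (1 + max (Real.log t) 0)

/-- The `L log L` Luxemburg norm of `f` over `B` with respect to the weight `w`:
`inf {σ > 0 : w(B)⁻¹ ∫_B Φ(|f|/σ) w ≤ 1}` (equal to `⊤` if no such `σ` exists). -/
def llogLOn {n : ℕ} (w : Rn n → ℝ) (B : Set (Rn n)) (f : Rn n → ℝ) : ℝ≥0∞ :=
  sInf {σ : ℝ≥0∞ | ∃ s : ℝ, 0 < s ∧ σ = ENNReal.ofReal s ∧
    (wtMass w B)⁻¹ *
      (∫⁻ x in B, ENNReal.ofReal (phiLL (|f x| / s)) * ENNReal.ofReal (w x)) ≤ 1}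

/-- The weighted amalgam norm of `L log L` type, `‖f‖_{(L log L, L^q)^α(w;μ)}`. -/
def llogLAmalgam {n : ℕ} (q α : ℝ) (w μ : Rn n → ℝ) (f : Rn n → ℝ) : ℝ≥0∞ :=
  ⨆ (r : ℝ) (_ : 0 < r),
    (∫⁻ y, (wtMass w (ball y r) ^ (1/α - 1/q) * llogLOn w (ball y r) f) ^ q *
      ENNReal.ofReal (μ y)) ^ (1/q)

/-- Reverse Hölder inequality with exponent `s` and constant `CR`. -/
def RevHolder {n : ℕ} (w : Rn n → ℝ) (s CR : ℝ) : Prop :=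
  ∀ (y : Rn n) (r : ℝ), 0 < r →
    ((volume (ball y r))⁻¹ * ∫⁻ x in ball y r, ENNReal.ofReal (w x ^ s)) ^ (1/s) ≤
      ENNReal.ofReal CR * ((volume (ball y r))⁻¹ * wtMass w (ball y r))

/-- under the balance condition, `1/p_k + 1/q_k - 1/α_k = (p/p_k)(1/p+1/q-1/α) > 0`
for each `k`, and for weights satisfying the reverse Jensen inequality,
`∏_k w_k(B)^{1/p_k+1/q_k-1/α_k} ≤ C ν(B)^{1/p+1/q-1/α}` for every ball `B`. -/
theorem balance_exponents_and_weight_product_bound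
    {n m : ℕ} (hm : 1 ≤ m) (p q α : ℝ) (pk qk αk : Fin m → ℝ)
    (hpk : ∀ k, 1 ≤ pk k) (hpα : ∀ k, pk k ≤ αk k) (hαq : ∀ k, αk k < qk k)
    (hp : 1/p = ∑ k, 1/pk k) (hq : 1/q = ∑ k, 1/qk k) (hα : 1/α = ∑ k, 1/αk k)
    (hbal : ∀ k l : Fin m, pk k * (1/αk k - 1/qk k) = pk l * (1/αk l - 1/qk l)) :
    (∀ k, 1/pk k + 1/qk k - 1/αk k = (p / pk k) * (1/p + 1/q - 1/α) ∧
      0 < 1/pk k + 1/qk k - 1/αk k) ∧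
    ∀ (w : Fin m → Rn n → ℝ), (∀ k, IsWeight (w k)) →
      ∀ CJ : ℝ, (∀ k, RevJensen (w k) CJ) →
        ∃ C : ℝ, 0 < C ∧ ∀ (y : Rn n) (r : ℝ), 0 < r →
          (∏ k, wtMass (w k) (ball y r) ^ (1/pk k + 1/qk k - 1/αk k)) ≤
            ENNReal.ofReal C * wtMass (nuW p pk w) (ball y r) ^ (1/p + 1/q - 1/α) := by
  have hm0 : 0 < m := hm
  set k0 : Fin m := ⟨0, hm0⟩ with hk0
  have hpk0 : ∀ k, 0 < pk k := fun k => lt_of_lt_of_le one_pos (hpk k)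
  have hαk0 : ∀ k, 0 < αk k := fun k => lt_of_lt_of_le (hpk0 k) (hpα k)
  have hqk0 : ∀ k, 0 < qk k := fun k => (hαk0 k).trans (hαq k)
  set c : ℝ := pk k0 * (1/αk k0 - 1/qk k0) with hc
  have hck : ∀ k, pk k * (1/αk k - 1/qk k) = c := fun k => hbal k k0
  have hsplit : ∀ k, 1/pk k + 1/qk k - 1/αk k = (1-c)/pk k := by
    intro k
    rw [← hck k]
    have h1 := (hpk0 k).ne'
    have h2 := (hαk0 k).ne'
    have h3 := (hqk0 k).ne'
    field_simp
    ring
  have hc1 : c < 1 := by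
    have h1 : 0 < 1/qk k0 := one_div_pos.mpr (hqk0 k0)
    have h2 : 1/αk k0 ≤ 1/pk k0 := one_div_le_one_div_of_le (hpk0 k0) (hpα k0)
    have h3 : pk k0 * (1/pk k0) = 1 := mul_one_div_cancel (hpk0 k0).ne'
    nlinarith [hpk0 k0]
  have hinvp : 0 < 1/p := by
    rw [hp]
    exact Finset.sum_pos (fun k _ => one_div_pos.mpr (hpk0 k)) ⟨k0, Finset.mem_univ _⟩
  have hp0 : 0 < p := one_div_pos.mp hinvp
  have hsum : 1/p + 1/q - 1/α = (1-c) * (1/p) := by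
    rw [hp, hq, hα, ← Finset.sum_add_distrib, ← Finset.sum_sub_distrib, Finset.mul_sum]
    exact Finset.sum_congr rfl fun k _ => by rw [hsplit k]; ring
  have part1 : ∀ k, 1/pk k + 1/qk k - 1/αk k = (p / pk k) * (1/p + 1/q - 1/α) ∧
      0 < 1/pk k + 1/qk k - 1/αk k := by
    intro k
    constructor
    · rw [hsum, hsplit k]
      have h1 := (hpk0 k).ne'
      field_simp
    · rw [hsplit k]
      exact div_pos (by linarith) (hpk0 k)
  refine ⟨part1, ?_⟩
  intro w hw CJ hJ
  set β : ℝ := 1/p + 1/q - 1/α with hβdef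
  have hβ : 0 < β := by rw [hsum]; exact mul_pos (by linarith) hinvp
  set Cm : ℝ := max CJ 1 with hCmdef
  have hCm0 : 0 < Cm := lt_of_lt_of_le one_pos (le_max_right _ _)
  have hCJle : CJ ≤ Cm := le_max_left _ _
  refine ⟨Cm ^ β, Real.rpow_pos_of_pos hCm0 β, ?_⟩
  intro y r hr
  set B : Set (Rn n) := ball y r with hBdef
  have hvol0 : 0 < volume B := measure_ball_pos _ y hr
  have hvolt : volume B ≠ ⊤ := measure_ball_lt_top.ne
  set V : ℝ := (volume B).toReal with hVdef
  have hV : 0 < V := ENNReal.toReal_pos hvol0.ne' hvolt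
  -- exponents
  set t : Fin m → ℝ := fun k => p / pk k with htdef
  have ht : ∀ k, 0 < t k := fun k => div_pos hp0 (hpk0 k)
  have hts : ∑ k, t k = 1 := by
    have : ∑ k, t k = p * ∑ k, 1/pk k := by
      rw [Finset.mul_sum]; exact Finset.sum_congr rfl fun k _ => by
        rw [htdef]; ring
    rw [this, ← hp, mul_one_div_cancel hp0.ne']
  -- integrability of weights on B
  have hIw : ∀ k, IntegrableOn (w k) B volume := fun k =>
    ((hw k).2.2.integrableOn_isCompact (isCompact_closedBall y r)).mono_set
      ball_subset_closedBall
  have hIL : ∀ k, IntegrableOn (fun x => Real.log (w k x)) B volume := fun k =>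
    ((hJ k).1.integrableOn_isCompact (isCompact_closedBall y r)).mono_set
      ball_subset_closedBall
  set I : Fin m → ℝ := fun k => ∫ x in B, w k x with hIdef
  set L : Fin m → ℝ := fun k => ∫ x in B, Real.log (w k x) with hLdef
  have hIpos : ∀ k, 0 < I k := by
    intro k
    rw [hIdef]
    rw [MeasureTheory.setIntegral_pos_iff_support_of_nonneg_ae
      (Filter.Eventually.of_forall fun x => ((hw k).2.1 x).le) (hIw k)]
    have hsupp : Function.support (w k) = Set.univ :=
      Set.eq_univ_of_forall fun x => ((hw k).2.1 x).ne'
    rw [hsupp, Set.univ_inter]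
    exact hvol0
  have hMass : ∀ k, wtMass (w k) B = ENNReal.ofReal (I k) := by
    intro k
    rw [wtMass, ← MeasureTheory.ofReal_integral_eq_lintegral_ofReal (hIw k)
      (Filter.Eventually.of_forall fun x => ((hw k).2.1 x).le)]
  have hRJ : ∀ k, I k ≤ Cm * V * Real.exp (V⁻¹ * L k) := by
    intro k
    refine le_trans ((hJ k).2 y r hr) ?_
    have : (0:ℝ) ≤ V * Real.exp (V⁻¹ * L k) := by positivity
    calc CJ * V * Real.exp (V⁻¹ * L k) = CJ * (V * Real.exp (V⁻¹ * L k)) := by ring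
      _ ≤ Cm * (V * Real.exp (V⁻¹ * L k)) := mul_le_mul_of_nonneg_right hCJle this
      _ = Cm * V * Real.exp (V⁻¹ * L k) := by ring
  -- the product weight
  set νf : Rn n → ℝ := nuW p pk w with hνdef
  have hνpos : ∀ x, 0 < νf x := by
    intro x
    exact Finset.prod_pos fun k _ => Real.rpow_pos_of_pos ((hw k).2.1 x) _
  have hνmeas : Measurable νf := by
    have hshow : νf = fun x => ∏ k, w k x ^ (p / pk k) := rfl
    rw [hshow]
    refine Finset.measurable_prod _ fun k _ => ?_
    have := (hw k).1
    fun_prop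
  have hlogν : ∀ x, Real.log (νf x) = ∑ k, t k * Real.log (w k x) := by
    intro x
    have hshow : νf x = ∏ k, w k x ^ (p / pk k) := rfl
    rw [hshow, Real.log_prod (fun k _ => (Real.rpow_pos_of_pos ((hw k).2.1 x) _).ne')]
    exact Finset.sum_congr rfl fun k _ => Real.log_rpow ((hw k).2.1 x) _
  by_cases hfin : wtMass νf B = ⊤
  · rw [hfin, ENNReal.top_rpow_of_pos hβ, ENNReal.mul_top
      (by simp [ENNReal.ofReal_eq_zero, not_le, Real.rpow_pos_of_pos hCm0 β])]
    exact le_top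
  -- ν is integrable on B
  have hIν : IntegrableOn νf B volume := by
    refine ⟨hνmeas.aestronglyMeasurable, ?_⟩
    rw [MeasureTheory.hasFiniteIntegral_iff_ofReal
      (Filter.Eventually.of_forall fun x => (hνpos x).le)]
    exact lt_of_le_of_ne le_top hfin
  set Jν : ℝ := ∫ x in B, νf x with hJνdef
  have hJνpos : 0 < Jν := by
    rw [hJνdef]
    rw [MeasureTheory.setIntegral_pos_iff_support_of_nonneg_ae
      (Filter.Eventually.of_forall fun x => (hνpos x).le) hIν]
    have hsupp : Function.support νf = Set.univ :=
      Set.eq_univ_of_forall fun x => (hνpos x).ne'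
    rw [hsupp, Set.univ_inter]
    exact hvol0
  have hMassν : wtMass νf B = ENNReal.ofReal Jν := by
    rw [wtMass, ← MeasureTheory.ofReal_integral_eq_lintegral_ofReal hIν
      (Filter.Eventually.of_forall fun x => (hνpos x).le)]
  -- integral of log ν
  have hILν : IntegrableOn (fun x => Real.log (νf x)) B volume := by
    have : (fun x => Real.log (νf x)) = fun x => ∑ k, t k * Real.log (w k x) :=
      funext hlogν
    rw [this]
    exact MeasureTheory.integrable_finset_sum _ fun k _ => (hIL k).const_mul _
  have hLν : (∫ x in B, Real.log (νf x)) = ∑ k, t k * L k := by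
    simp_rw [hlogν]
    rw [MeasureTheory.integral_finset_sum _ fun k _ => (hIL k).const_mul _]
    exact Finset.sum_congr rfl fun k _ => integral_const_mul _ _
  -- Jensen's inequality
  haveI : IsFiniteMeasure (volume.restrict B) :=
    ⟨by rw [Measure.restrict_apply_univ]; exact lt_of_le_of_ne le_top hvolt⟩
  haveI : NeZero (volume.restrict B) :=
    ⟨fun h => hvol0.ne' (Measure.restrict_eq_zero.mp h)⟩
  have jensen : Real.exp (V⁻¹ * ∫ x in B, Real.log (νf x)) ≤ V⁻¹ * Jν := by
    have hexplog : (fun x => Real.exp (Real.log (νf x))) = νf :=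
      funext fun x => Real.exp_log (hνpos x)
    have h := convexOn_exp.map_average_le Real.continuous_exp.continuousOn
      isClosed_univ (μ := volume.restrict B)
      (Filter.Eventually.of_forall fun x => Set.mem_univ _) hILν
      (by rw [Function.comp_def, hexplog]; exact hIν)
    rw [MeasureTheory.average_eq, MeasureTheory.average_eq,
      measureReal_restrict_apply_univ] at h
    simp only [smul_eq_mul] at h
    calc Real.exp (V⁻¹ * ∫ x in B, Real.log (νf x)) ≤
        V⁻¹ * ∫ x, Real.exp (Real.log (νf x)) ∂(volume.restrict B) := h
      _ = V⁻¹ * Jν := by rw [hexplog]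
  -- the key real inequality
  have key : (∏ k, I k ^ t k) ≤ Cm * Jν := by
    calc (∏ k, I k ^ t k) ≤ ∏ k, (Cm * V * Real.exp (V⁻¹ * L k)) ^ t k := by
          refine Finset.prod_le_prod (fun k _ => Real.rpow_nonneg (hIpos k).le _)
            (fun k _ => Real.rpow_le_rpow (hIpos k).le (hRJ k) (ht k).le)
      _ = Cm * V * Real.exp (V⁻¹ * ∑ k, t k * L k) := by
          have h1 : ∀ k : Fin m, (Cm * V * Real.exp (V⁻¹ * L k)) ^ t k
              = (Cm * V) ^ t k * Real.exp (t k * (V⁻¹ * L k)) := by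
            intro k
            rw [Real.mul_rpow (mul_pos hCm0 hV).le (Real.exp_pos _).le, ← Real.exp_mul,
              mul_comm (V⁻¹ * L k) (t k)]
          rw [Finset.prod_congr rfl (fun k _ => h1 k), Finset.prod_mul_distrib,
            ← Real.rpow_sum_of_pos (mul_pos hCm0 hV), hts, Real.rpow_one, ← Real.exp_sum]
          rw [Finset.mul_sum]
          exact congrArg (fun z => Cm * V * Real.exp z)
            (Finset.sum_congr rfl fun k _ => by ring)
      _ = Cm * V * Real.exp (V⁻¹ * ∫ x in B, Real.log (νf x)) := by rw [hLν]
      _ ≤ Cm * V * (V⁻¹ * Jν) := by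
          refine mul_le_mul_of_nonneg_left jensen (by positivity)
      _ = Cm * Jν := by field_simp
  -- pass to ENNReal
  have hek : ∀ k, 1/pk k + 1/qk k - 1/αk k = t k * β := fun k => (part1 k).1
  calc (∏ k, wtMass (w k) B ^ (1/pk k + 1/qk k - 1/αk k))
      = ENNReal.ofReal (∏ k, I k ^ (t k * β)) := by
        rw [ENNReal.ofReal_prod_of_nonneg fun k _ => Real.rpow_nonneg (hIpos k).le _]
        exact Finset.prod_congr rfl fun k _ => by
          rw [hek k, hMass k, ENNReal.ofReal_rpow_of_pos (hIpos k)]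
    _ ≤ ENNReal.ofReal (Cm ^ β * Jν ^ β) := by
        refine ENNReal.ofReal_le_ofReal ?_
        have h1 : (∏ k, I k ^ (t k * β)) = (∏ k, I k ^ t k) ^ β := by
          rw [← Real.finset_prod_rpow _ _ (fun k _ => Real.rpow_nonneg (hIpos k).le _)]
          exact Finset.prod_congr rfl fun k _ => Real.rpow_mul (hIpos k).le _ _
        rw [h1, ← Real.mul_rpow hCm0.le hJνpos.le]
        exact Real.rpow_le_rpow (Finset.prod_nonneg fun k _ =>
          Real.rpow_nonneg (hIpos k).le _) key hβ.le
    _ = ENNReal.ofReal (Cm ^ β) * wtMass νf B ^ β := by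
        rw [ENNReal.ofReal_mul (Real.rpow_nonneg hCm0.le _), hMassν,
          ENNReal.ofReal_rpow_of_pos hJνpos]
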